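/- Let λ_0,…,λ_{N−1} be a nonnegative adapted integrable price process and b ≥ 0. Call a storage plan z_0,…,z_N admissible if z_0 = 0, each z_{k+1} is F_k-measurable, and 0 ≤ z_k ≤ b almost surely for all k; its expected arbitrage revenue is E[Σ_{k=0}^{N−1} λ_k (z_k − z_{k+1})]. Then the supremum of expected revenue over all admissible (causal) storage plans equals b · Σ_{k=0}^{N−2} E[( E[λ_{k+1} | F_k] − λ_k )^+], and it is attained by the threshold policy that sets z_{k+1} = b if E[λ_{k+1} | F_k] ≥ λ_k, z_{k+1} = 0 otherwise, and z_N = 0. (Causal price-arbitrage interpretation of the locational marginal value in Theorem 2.) -/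

import Mathlib

open MeasureTheory

noncomputable section

/-- The causal threshold storage plan: `z 0 = 0`, `z N = 0`, and for `k + 1 ≠ N`,
`z (k+1) = b` if `E[λ_{k+1} | F_k] ≥ λ_k` and `z (k+1) = 0` otherwise. -/
def thresholdPlan {Ω : Type*} [m0 : MeasurableSpace Ω] (μ : Measure Ω)
    (F : Filtration ℕ m0) (lam : ℕ → Ω → ℝ) (N : ℕ) (b : ℝ) : ℕ → Ω → ℝ
  | 0, _ => 0
  | (k + 1), ω =>
      if k + 1 = N then 0
      else if lam k ω ≤ (μ[lam (k + 1)|F k]) ω then b else 0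

section AuxHelpers
variable {Ω : Type*} [m0 : MeasurableSpace Ω] {μ : Measure Ω} [IsProbabilityMeasure μ]

/-- Integrability of a product with an a.e.-bounded function. -/
lemma integrable_mul_bdd {f g : Ω → ℝ} {b : ℝ} (hf : Integrable f μ)
    (hg : AEStronglyMeasurable g μ) (hgb : ∀ᵐ ω ∂μ, 0 ≤ g ω ∧ g ω ≤ b) :
    Integrable (fun ω => f ω * g ω) μ := by
  refine Integrable.mono' (hf.norm.const_mul b) (hf.aestronglyMeasurable.mul hg) ?_
  filter_upwards [hgb] with ω ⟨h0, h1⟩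
  rw [norm_mul]
  calc ‖f ω‖ * ‖g ω‖ ≤ ‖f ω‖ * b := by
        refine mul_le_mul_of_nonneg_left ?_ (norm_nonneg _)
        rw [Real.norm_eq_abs, abs_of_nonneg h0]; exact h1
    _ = b * ‖f ω‖ := mul_comm _ _

/-- Pull-out: `∫ f * g = ∫ E[f|m] * g` for `g` bounded `m`-measurable. -/
lemma integral_mul_condexp {m : MeasurableSpace Ω} (hm : m ≤ m0) {f g : Ω → ℝ} {b : ℝ}
    (hf : Integrable f μ) (hg : StronglyMeasurable[m] g)
    (hgb : ∀ᵐ ω ∂μ, 0 ≤ g ω ∧ g ω ≤ b) :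
    ∫ ω, f ω * g ω ∂μ = ∫ ω, (μ[f|m]) ω * g ω ∂μ := by
  have hgm : AEStronglyMeasurable[m0] g μ :=
    StronglyMeasurable.aestronglyMeasurable (m := m0) (μ := μ) (hg.mono hm)
  have hfg : Integrable (fun ω => g ω * f ω) μ := by
    simpa [mul_comm] using integrable_mul_bdd (m0 := m0) hf hgm hgb
  have h1 : ∫ ω, g ω * f ω ∂μ = ∫ ω, (μ[fun ω => g ω * f ω|m]) ω ∂μ :=
    (integral_condExp hm).symm
  have h2 : μ[fun ω => g ω * f ω|m] =ᵐ[μ] fun ω => g ω * (μ[f|m]) ω :=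
    condExp_mul_of_stronglyMeasurable_left hg hfg hf
  calc ∫ ω, f ω * g ω ∂μ = ∫ ω, g ω * f ω ∂μ := by simp [mul_comm]
    _ = ∫ ω, (μ[fun ω => g ω * f ω|m]) ω ∂μ := h1
    _ = ∫ ω, g ω * (μ[f|m]) ω ∂μ := integral_congr_ae h2
    _ = ∫ ω, (μ[f|m]) ω * g ω ∂μ := by simp [mul_comm]

lemma mul_le_max_mul {x z b : ℝ} (hz0 : 0 ≤ z) (hzb : z ≤ b) : x * z ≤ max x 0 * b := by
  rcases le_or_gt 0 x with hx | hx
  · rw [max_eq_left hx]; exact mul_le_mul_of_nonneg_left hzb hx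
  · rw [max_eq_right hx.le, zero_mul]
    exact mul_nonpos_of_nonpos_of_nonneg hx.le hz0

/-- Abel-type rewriting of the revenue. -/
lemma revenue_abel (lam z : ℕ → ℝ) (hz0 : z 0 = 0) :
    ∀ n, 1 ≤ n →
      ∑ k ∈ Finset.range n, lam k * (z k - z (k + 1)) =
        (∑ k ∈ Finset.range (n - 1), (lam (k + 1) - lam k) * z (k + 1)) - lam (n - 1) * z n := by
  intro n hn
  induction n with
  | zero => omega
  | succ m ih =>
    rcases Nat.eq_or_lt_of_le hn with h1 | h1
    · simp [← h1, hz0]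
    · have hm : 1 ≤ m := by omega
      rw [Finset.sum_range_succ, ih hm]
      have hm' : m - 1 + 1 = m := by omega
      rw [Nat.succ_sub_one]
      rw [show m = (m-1)+1 from hm'.symm, Finset.sum_range_succ, hm']
      ring

/-- Expected revenue of an admissible plan, rewritten via conditional expectations. -/
lemma revenue_eq {F : Filtration ℕ m0} {lam : ℕ → Ω → ℝ} {N : ℕ} (hN : 1 ≤ N)
    (hint : ∀ k, k < N → Integrable (lam k) μ)
    {z : ℕ → Ω → ℝ} (hz0 : ∀ ω, z 0 ω = 0)
    (hzmeas : ∀ k, k + 1 ≤ N → StronglyMeasurable[F k] (z (k + 1)))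
    {b : ℝ} (hzbd : ∀ k, k ≤ N → ∀ᵐ ω ∂μ, 0 ≤ z k ω ∧ z k ω ≤ b) :
    ∫ ω, ∑ k ∈ Finset.range N, lam k ω * (z k ω - z (k + 1) ω) ∂μ =
      (∑ k ∈ Finset.range (N - 1),
        ∫ ω, ((μ[lam (k + 1)|F k]) ω - lam k ω) * z (k + 1) ω ∂μ)
      - ∫ ω, lam (N - 1) ω * z N ω ∂μ := by
  have hzae : ∀ k, k + 1 ≤ N → AEStronglyMeasurable (z (k + 1)) μ := fun k hk =>
    StronglyMeasurable.aestronglyMeasurable (m := m0) (μ := μ) ((hzmeas k hk).mono (F.le k))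
  have hint1 : ∀ k ∈ Finset.range (N - 1),
      Integrable (fun ω => (lam (k + 1) ω - lam k ω) * z (k + 1) ω) μ := by
    intro k hk
    have hkr : k < N - 1 := Finset.mem_range.mp hk
    have hk' : k + 1 ≤ N := by omega
    exact integrable_mul_bdd ((hint (k+1) (by omega)).sub (hint k (by omega)))
      (hzae k hk') (hzbd (k+1) hk')
  have hzNae : AEStronglyMeasurable (z N) μ := by
    have := hzae (N - 1) (by omega)
    rwa [show N - 1 + 1 = N by omega] at this
  have hintN : Integrable (fun ω => lam (N - 1) ω * z N ω) μ :=
    integrable_mul_bdd (hint (N-1) (by omega)) hzNae (hzbd N le_rfl)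
  have hpt : (fun ω => ∑ k ∈ Finset.range N, lam k ω * (z k ω - z (k + 1) ω)) =
      fun ω => (∑ k ∈ Finset.range (N - 1), (lam (k+1) ω - lam k ω) * z (k+1) ω)
        - lam (N - 1) ω * z N ω :=
    funext fun ω => revenue_abel (fun k => lam k ω) (fun k => z k ω) (hz0 ω) N hN
  rw [hpt, integral_sub (integrable_finset_sum _ hint1) hintN,
    integral_finset_sum _ hint1]
  congr 1
  refine Finset.sum_congr rfl fun k hk => ?_
  have hkr : k < N - 1 := Finset.mem_range.mp hk
  have hk' : k + 1 ≤ N := by omega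
  have hi1 : Integrable (fun ω => lam (k+1) ω * z (k+1) ω) μ :=
    integrable_mul_bdd (hint (k+1) (by omega)) (hzae k hk') (hzbd (k+1) hk')
  have hi2 : Integrable (fun ω => lam k ω * z (k+1) ω) μ :=
    integrable_mul_bdd (hint k (by omega)) (hzae k hk') (hzbd (k+1) hk')
  have hi3 : Integrable (fun ω => (μ[lam (k+1)|F k]) ω * z (k+1) ω) μ :=
    integrable_mul_bdd integrable_condExp (hzae k hk') (hzbd (k+1) hk')
  calc ∫ ω, (lam (k+1) ω - lam k ω) * z (k+1) ω ∂μ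
      = ∫ ω, (lam (k+1) ω * z (k+1) ω - lam k ω * z (k+1) ω) ∂μ := by
        congr 1; funext ω; ring
    _ = (∫ ω, lam (k+1) ω * z (k+1) ω ∂μ) - ∫ ω, lam k ω * z (k+1) ω ∂μ :=
        integral_sub hi1 hi2
    _ = (∫ ω, (μ[lam (k+1)|F k]) ω * z (k+1) ω ∂μ) - ∫ ω, lam k ω * z (k+1) ω ∂μ := by
        rw [integral_mul_condexp (F.le k) (hint (k+1) (by omega)) (hzmeas k hk')
          (hzbd (k+1) hk')]
    _ = ∫ ω, ((μ[lam (k+1)|F k]) ω - lam k ω) * z (k+1) ω ∂μ := by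
        rw [← integral_sub hi3 hi2]; congr 1; funext ω; ring

end AuxHelpers

/-- Causal price-arbitrage interpretation of the locational marginal value.
For a nonnegative adapted integrable price process and capacity `b ≥ 0`, the supremum of
the expected arbitrage revenue `E[∑_{k<N} λ_k (z_k − z_{k+1})]` over all admissible causal
storage plans (`z 0 = 0`, `z (k+1)` being `F k`-measurable, `0 ≤ z k ≤ b` a.s.) equals
`b · ∑_{k=0}^{N−2} E[(E[λ_{k+1} | F_k] − λ_k)⁺]`, and it is attained by the threshold
policy. -/

theorem causal_arbitrage_value {Ω : Type*} [m0 : MeasurableSpace Ω]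
    (μ : Measure Ω) [IsProbabilityMeasure μ]
    (N : ℕ) (F : Filtration ℕ m0)
    (lam : ℕ → Ω → ℝ)
    (hadapt : ∀ k, k < N → StronglyMeasurable[F k] (lam k))
    (hint : ∀ k, k < N → Integrable (lam k) μ)
    (hpos : ∀ k, k < N → ∀ᵐ ω ∂μ, 0 ≤ lam k ω)
    (b : ℝ) (hb : 0 ≤ b) :
    IsGreatest
      { r : ℝ | ∃ z : ℕ → Ω → ℝ,
          (∀ ω, z 0 ω = 0) ∧
          (∀ k, k + 1 ≤ N → StronglyMeasurable[F k] (z (k + 1))) ∧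
          (∀ k, k ≤ N → ∀ᵐ ω ∂μ, 0 ≤ z k ω ∧ z k ω ≤ b) ∧
          r = ∫ ω, ∑ k ∈ Finset.range N, lam k ω * (z k ω - z (k + 1) ω) ∂μ }
      (b * ∑ k ∈ Finset.range (N - 1),
          ∫ ω, max ((μ[lam (k + 1)|F k]) ω - lam k ω) 0 ∂μ) ∧
    ∫ ω, ∑ k ∈ Finset.range N, lam k ω *
          (thresholdPlan μ F lam N b k ω - thresholdPlan μ F lam N b (k + 1) ω) ∂μ
      = b * ∑ k ∈ Finset.range (N - 1),
          ∫ ω, max ((μ[lam (k + 1)|F k]) ω - lam k ω) 0 ∂μ := by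
  rcases Nat.eq_zero_or_pos N with hN0 | hN
  · subst hN0
    refine ⟨⟨⟨fun _ _ => 0, fun _ => rfl, fun k hk => stronglyMeasurable_const,
        fun k _ => ae_of_all _ fun ω => ⟨le_refl 0, hb⟩, by simp⟩, ?_⟩, by simp⟩
    rintro r ⟨z, _, _, _, rfl⟩
    simp
  -- N ≥ 1
  set T := thresholdPlan μ F lam N b with hT
  have hT0 : ∀ ω, T 0 ω = 0 := fun _ => rfl
  have hTsucc : ∀ k ω, T (k + 1) ω =
      if k + 1 = N then 0 else if lam k ω ≤ (μ[lam (k + 1)|F k]) ω then b else 0 :=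
    fun k ω => rfl
  have hTN : ∀ ω, T N ω = 0 := by
    intro ω
    obtain ⟨m, rfl⟩ : ∃ m, N = m + 1 := ⟨N - 1, by omega⟩
    simp [hTsucc]
  have hTmeas : ∀ k, k + 1 ≤ N → StronglyMeasurable[F k] (T (k + 1)) := by
    intro k hk
    by_cases h : k + 1 = N
    · have : T (k + 1) = fun _ => (0 : ℝ) := funext fun ω => by rw [hTsucc, if_pos h]
      rw [this]; exact stronglyMeasurable_const
    · have hs : MeasurableSet[F k] {ω | lam k ω ≤ (μ[lam (k + 1)|F k]) ω} :=
        measurableSet_le (hadapt k (by omega)).measurable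
          stronglyMeasurable_condExp.measurable
      have : T (k + 1) = {ω | lam k ω ≤ (μ[lam (k + 1)|F k]) ω}.indicator
          (fun _ => b) := by
        funext ω
        by_cases h2 : lam k ω ≤ (μ[lam (k + 1)|F k]) ω <;>
          simp [hTsucc, h, h2, Set.indicator_apply]
      rw [this]
      exact stronglyMeasurable_const.indicator hs
  have hTbd : ∀ k, k ≤ N → ∀ᵐ ω ∂μ, 0 ≤ T k ω ∧ T k ω ≤ b := by
    intro k _
    refine ae_of_all _ fun ω => ?_
    cases k with
    | zero => exact ⟨le_of_eq (hT0 ω).symm, (hT0 ω) ▸ hb⟩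
    | succ m =>
      rw [hTsucc]
      split_ifs <;> simp [hb]
  -- value of the threshold plan
  have hval : ∫ ω, ∑ k ∈ Finset.range N, lam k ω * (T k ω - T (k + 1) ω) ∂μ
      = b * ∑ k ∈ Finset.range (N - 1),
          ∫ ω, max ((μ[lam (k + 1)|F k]) ω - lam k ω) 0 ∂μ := by
    rw [revenue_eq hN hint hT0 hTmeas hTbd]
    have h2 : ∫ ω, lam (N - 1) ω * T N ω ∂μ = 0 := by
      simp [hTN]
    rw [h2, sub_zero, Finset.mul_sum]
    refine Finset.sum_congr rfl fun k hk => ?_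
    have hkr : k < N - 1 := Finset.mem_range.mp hk
    have hne : k + 1 ≠ N := by omega
    have hpt : ∀ ω, ((μ[lam (k + 1)|F k]) ω - lam k ω) * T (k + 1) ω
        = max ((μ[lam (k + 1)|F k]) ω - lam k ω) 0 * b := by
      intro ω
      rw [hTsucc, if_neg hne]
      by_cases h2 : lam k ω ≤ (μ[lam (k + 1)|F k]) ω
      · rw [if_pos h2, max_eq_left (sub_nonneg.mpr h2)]
      · rw [if_neg h2, max_eq_right (sub_nonpos.mpr (le_of_not_ge h2)), mul_zero,
          zero_mul]
    calc ∫ ω, ((μ[lam (k + 1)|F k]) ω - lam k ω) * T (k + 1) ω ∂μ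
        = ∫ ω, max ((μ[lam (k + 1)|F k]) ω - lam k ω) 0 * b ∂μ := by
          congr 1; funext ω; exact hpt ω
      _ = (∫ ω, max ((μ[lam (k + 1)|F k]) ω - lam k ω) 0 ∂μ) * b :=
          integral_mul_const b _
      _ = b * ∫ ω, max ((μ[lam (k + 1)|F k]) ω - lam k ω) 0 ∂μ := mul_comm _ _
  refine ⟨⟨⟨T, hT0, hTmeas, hTbd, hval.symm⟩, ?_⟩, hval⟩
  -- upper bound
  rintro r ⟨z, hz0, hzmeas, hzbd, rfl⟩
  rw [revenue_eq hN hint hz0 hzmeas hzbd]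
  have hzae : ∀ k, k + 1 ≤ N → AEStronglyMeasurable (z (k + 1)) μ := fun k hk =>
    StronglyMeasurable.aestronglyMeasurable (m := m0) (μ := μ) ((hzmeas k hk).mono (F.le k))
  have hB : 0 ≤ ∫ ω, lam (N - 1) ω * z N ω ∂μ := by
    refine integral_nonneg_of_ae ?_
    filter_upwards [hpos (N - 1) (by omega), hzbd N le_rfl] with ω h1 h2
    exact mul_nonneg h1 h2.1
  have hA : (∑ k ∈ Finset.range (N - 1),
        ∫ ω, ((μ[lam (k + 1)|F k]) ω - lam k ω) * z (k + 1) ω ∂μ)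
      ≤ b * ∑ k ∈ Finset.range (N - 1),
          ∫ ω, max ((μ[lam (k + 1)|F k]) ω - lam k ω) 0 ∂μ := by
    rw [Finset.mul_sum]
    refine Finset.sum_le_sum fun k hk => ?_
    have hkr : k < N - 1 := Finset.mem_range.mp hk
    have hk' : k + 1 ≤ N := by omega
    have hD : Integrable (fun ω => (μ[lam (k + 1)|F k]) ω - lam k ω) μ :=
      integrable_condExp.sub (hint k (by omega))
    have hi1 : Integrable (fun ω => ((μ[lam (k + 1)|F k]) ω - lam k ω) * z (k + 1) ω) μ :=
      integrable_mul_bdd hD (hzae k hk') (hzbd (k + 1) hk')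
    have hi2 : Integrable (fun ω => max ((μ[lam (k + 1)|F k]) ω - lam k ω) 0 * b) μ :=
      hD.pos_part.mul_const b
    calc ∫ ω, ((μ[lam (k + 1)|F k]) ω - lam k ω) * z (k + 1) ω ∂μ
        ≤ ∫ ω, max ((μ[lam (k + 1)|F k]) ω - lam k ω) 0 * b ∂μ := by
          refine integral_mono_ae hi1 hi2 ?_
          filter_upwards [hzbd (k + 1) hk'] with ω h
          exact mul_le_max_mul h.1 h.2
      _ = (∫ ω, max ((μ[lam (k + 1)|F k]) ω - lam k ω) 0 ∂μ) * b :=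
          integral_mul_const b _
      _ = b * ∫ ω, max ((μ[lam (k + 1)|F k]) ω - lam k ω) 0 ∂μ := mul_comm _ _
  linarith
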